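/- arXiv:1503.03572 — 3 statements merged into one kernel-verified Lean document; each statement's English description precedes it below -/
import Mathlib

section
/- The number of orientations of a cycle of length k with exactly i vertices of in-degree 2 equals 2 * C(k, 2i), for 0 ≤ i ≤ k/2. -/
open Finset

variable {k : ℕ} [NeZero k]

private lemma val_sub_one (v : Fin k) (h : v ≠ 0) : (v - 1).val = v.val - 1 := by
  have hk : 0 < k := Nat.pos_of_ne_zero (NeZero.ne k)
  have hk2 : 2 ≤ k := by
    rcases Nat.lt_or_ge k 2 with h2 | h2
    · interval_cases k
      exact absurd (Subsingleton.elim v 0) h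
    · exact h2
  have hv : 1 ≤ v.val := by
    rcases Nat.eq_zero_or_pos v.val with h0 | h0
    · exact absurd (Fin.ext h0) h
    · exact h0
  rw [Fin.sub_def]
  simp only [Fin.val_one']
  have h1 : 1 % k = 1 := Nat.mod_eq_of_lt hk2
  rw [h1]
  have : k - 1 + v.val = (v.val - 1) + k := by omega
  rw [this, Nat.add_mod_right, Nat.mod_eq_of_lt (by omega : v.val - 1 < k)]

private lemma val_zero_sub_one (hk2 : 2 ≤ k) : ((0 : Fin k) - 1).val = k - 1 := by
  rw [Fin.sub_def]
  simp only [Fin.val_one', Fin.val_zero]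
  rw [Nat.mod_eq_of_lt hk2, Nat.add_zero, Nat.mod_eq_of_lt (by omega)]

/-- number of "change markers" in `S` strictly after position 0 up to position `v`. -/
private def cnt (S : Finset (Fin k)) (v : Fin k) : ℕ :=
  (S.filter (fun u => 0 < u.val ∧ u.val ≤ v.val)).card

/-- orientation built from initial value `b` and change set `S`. -/
private def gg (b : Bool) (S : Finset (Fin k)) (v : Fin k) : Bool :=
  xor b (decide (Odd (cnt S v)))

private lemma cnt_zero (S : Finset (Fin k)) : cnt S 0 = 0 := by
  unfold cnt
  rw [Finset.card_eq_zero, filter_eq_empty_iff]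
  intro u _
  simp only [Fin.val_zero, not_and]
  omega

private lemma cnt_succ (S : Finset (Fin k)) (v : Fin k) (h : v ≠ 0) :
    cnt S v = cnt S (v - 1) + (if v ∈ S then 1 else 0) := by
  have hv : 1 ≤ v.val := by
    rcases Nat.eq_zero_or_pos v.val with h0 | h0
    · exact absurd (Fin.ext h0) h
    · exact h0
  have hsub := val_sub_one v h
  unfold cnt
  have hcong : S.filter (fun u => 0 < u.val ∧ u.val ≤ v.val)
      = S.filter (fun u => (0 < u.val ∧ u.val ≤ (v-1).val) ∨ u = v) := by
    apply filter_congr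
    intro u _
    simp only [hsub, eq_iff_iff]
    constructor
    · rintro ⟨h1, h2⟩
      rcases Nat.lt_or_ge u.val v.val with h3 | h3
      · exact Or.inl ⟨h1, by omega⟩
      · exact Or.inr (Fin.ext (by omega))
    · rintro (⟨h1, h2⟩ | rfl)
      · exact ⟨h1, by omega⟩
      · exact ⟨hv, le_rfl⟩
  rw [hcong, filter_or, card_union_of_disjoint, filter_eq']
  · split <;> simp
  · rw [disjoint_left]
    rintro u hu hu'
    simp only [mem_filter] at hu hu'
    have := hu.2.2
    rw [hu'.2] at this
    omega

private lemma cnt_last (S : Finset (Fin k)) (hk2 : 2 ≤ k) :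
    cnt S ((0 : Fin k) - 1) = S.card - (if (0 : Fin k) ∈ S then 1 else 0) := by
  unfold cnt
  rw [val_zero_sub_one hk2]
  have hcong : S.filter (fun u => 0 < u.val ∧ u.val ≤ k - 1)
      = S.filter (fun u => ¬ (u = 0)) := by
    apply filter_congr
    intro u _
    have := u.isLt
    constructor
    · rintro ⟨h1, _⟩ h0
      rw [h0] at h1; simp at h1
    · intro h0
      refine ⟨?_, by omega⟩
      rcases Nat.eq_zero_or_pos u.val with hz | hz
      · exact absurd (Fin.ext hz) h0
      · exact hz
  rw [hcong]
  have := S.card_filter_add_card_filter_not (p := fun u => u = 0)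
  rw [filter_eq'] at this
  split at this
  · simp only [card_singleton] at this
    simp_all
    omega
  · simp only [card_empty] at this
    rename_i h0
    rw [if_neg h0]
    omega

private lemma gg_change (b : Bool) (S : Finset (Fin k)) (hk2 : 2 ≤ k) (hS : Even S.card)
    (v : Fin k) : (gg b S (v - 1) ≠ gg b S v) ↔ v ∈ S := by
  have key : ∀ m n : ℕ, (xor b (decide (Odd m)) ≠ xor b (decide (Odd n)))
      ↔ ¬ (Odd m ↔ Odd n) := by
    intro m n
    cases b <;> simp [decide_eq_decide]
  unfold gg
  rw [Nat.even_iff] at hS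
  by_cases hv : v = 0
  · subst hv
    rw [key, cnt_last S hk2, cnt_zero]
    by_cases h0 : (0 : Fin k) ∈ S
    · have hc : 1 ≤ S.card := card_pos.mpr ⟨0, h0⟩
      simp only [h0, if_pos, iff_true]
      simp [Nat.odd_iff]
      omega
    · simp only [h0, if_neg, not_false_iff, iff_false]
      simp [Nat.odd_iff]
      omega
  · rw [key, cnt_succ S v hv]
    by_cases hm : v ∈ S
    · simp only [hm, if_pos, iff_true]
      simp [Nat.odd_iff]
      omega
    · simp only [hm, if_neg, not_false_iff, iff_false]
      simp [Nat.odd_iff]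

private def chg (o : Fin k → Bool) : Finset (Fin k) :=
  univ.filter (fun v => o (v - 1) ≠ o v)

private lemma gg_reconstruct (o : Fin k → Bool) (v : Fin k) :
    gg (o 0) (chg o) v = o v := by
  have H : ∀ n : ℕ, ∀ v : Fin k, v.val = n → gg (o 0) (chg o) v = o v := by
    intro n
    induction n with
    | zero =>
      intro v hv
      have h0 : v = 0 := Fin.ext (by simpa using hv)
      subst h0
      unfold gg
      rw [cnt_zero]
      simp
    | succ n ih =>
      intro v hv
      have hv0 : v ≠ 0 := by
        intro h; rw [h] at hv; simp at hv
      have h1 : (v - 1).val = n := by rw [val_sub_one v hv0]; omega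
      have ihv := ih (v - 1) h1
      have hmem : v ∈ chg o ↔ ¬ (o (v - 1) = o v) := by simp [chg]
      unfold gg at ihv ⊢
      rw [cnt_succ (chg o) v hv0]
      by_cases hc : o (v - 1) = o v
      · rw [if_neg (by rw [hmem]; exact not_not_intro hc), Nat.add_zero, ihv, hc]
      · rw [if_pos (hmem.mpr hc)]
        rw [← ihv] at hc
        cases hb : (o 0) <;> cases hp : decide (Odd (cnt (chg o) (v - 1))) <;>
          simp_all [Nat.odd_add_one, Nat.even_iff, Nat.odd_iff]
  exact H v.val v rfl

private lemma falls_eq_rises (o : Fin k → Bool) :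
    (univ.filter (fun v : Fin k => o (v - 1) = true ∧ o v = false)).card
    = (univ.filter (fun v : Fin k => o (v - 1) = false ∧ o v = true)).card := by
  have hsum : ∑ v : Fin k, ((if o v = true then (1 : ℤ) else 0)
      - (if o (v - 1) = true then 1 else 0)) = 0 := by
    rw [Finset.sum_sub_distrib]
    have h : ∑ v : Fin k, (if o (v - 1) = true then (1 : ℤ) else 0)
        = ∑ v : Fin k, (if o v = true then (1 : ℤ) else 0) :=
      Fintype.sum_equiv (Equiv.subRight (1 : Fin k)) _ _ (fun v => rfl)
    rw [h, sub_self]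
  have hsum2 : ∑ v : Fin k, ((if o v = true then (1 : ℤ) else 0)
      - (if o (v - 1) = true then 1 else 0))
      = ∑ v : Fin k, ((if o (v - 1) = false ∧ o v = true then (1 : ℤ) else 0)
      - (if o (v - 1) = true ∧ o v = false then 1 else 0)) := by
    apply Finset.sum_congr rfl
    intro v _
    cases h1 : o (v - 1) <;> cases h2 : o v <;> simp
  rw [hsum2, Finset.sum_sub_distrib, Finset.sum_boole, Finset.sum_boole, sub_eq_zero] at hsum
  exact_mod_cast hsum.symm

private lemma chg_card (o : Fin k → Bool) :
    (chg o).card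
    = 2 * (univ.filter (fun v : Fin k => o (v - 1) = true ∧ o v = false)).card := by
  have hsplit : chg o = (univ.filter (fun v : Fin k => o (v - 1) = true ∧ o v = false))
      ∪ (univ.filter (fun v : Fin k => o (v - 1) = false ∧ o v = true)) := by
    ext v
    simp only [chg, mem_filter, mem_union, mem_univ, true_and]
    cases h1 : o (v - 1) <;> cases h2 : o v <;> simp
  rw [hsplit, card_union_of_disjoint, ← falls_eq_rises o, two_mul]
  rw [disjoint_left]
  intro v hv hv'
  simp only [mem_filter] at hv hv'
  rw [hv.2.1] at hv'
  simp at hv'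

/-- Orient the edges of a cycle on `k` vertices (vertex set `Fin k`, edge `v` joining
`v` and `v+1`) by a function `o : Fin k → Bool`, where `o v = true` means edge `v`
is oriented from `v` to `v+1`. Vertex `v` has in-degree 2 iff edge `v-1` points to `v`
(`o (v-1) = true`) and edge `v` points to `v` (`o v = false`). The number of
orientations with exactly `i` vertices of in-degree 2 equals `2 * C(k, 2i)`. -/
theorem cycle_orientations_indegree_two (k i : ℕ) [NeZero k] (hk : 3 ≤ k)
    (hi : 2 * i ≤ k) :
    (Finset.univ.filter (fun o : Fin k → Bool =>
      (Finset.univ.filter (fun v : Fin k => o (v - 1) = true ∧ o v = false)).card = i)).card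
      = 2 * Nat.choose k (2 * i) := by
  classical
  have hk2 : 2 ≤ k := by omega
  have hcardt : ((univ : Finset Bool) ×ˢ powersetCard (2 * i) (univ : Finset (Fin k))).card
      = 2 * Nat.choose k (2 * i) := by
    rw [card_product, card_powersetCard, card_univ, card_univ, Fintype.card_bool,
      Fintype.card_fin]
  rw [← hcardt]
  apply Finset.card_bij' (fun o _ => (o 0, chg o)) (fun p _ => gg p.1 p.2)
  · -- maps into t
    intro o ho
    rw [mem_filter] at ho
    rw [mem_product, mem_powersetCard_univ]
    refine ⟨mem_univ _, ?_⟩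
    rw [chg_card, ho.2]
  · -- left inverse
    intro o _
    funext v
    exact gg_reconstruct o v
  · -- right inverse
    intro p hp
    rw [mem_product, mem_powersetCard_univ] at hp
    have heven : Even p.2.card := by rw [hp.2]; exact ⟨i, by omega⟩
    have hchg : chg (gg p.1 p.2) = p.2 := by
      ext v
      simp only [chg, mem_filter, mem_univ, true_and]
      rw [← gg_change p.1 p.2 hk2 heven v]
    have h0 : gg p.1 p.2 0 = p.1 := by
      unfold gg
      rw [cnt_zero]
      simp
    rw [h0, hchg]
  · -- maps into s
    intro p hp
    rw [mem_product, mem_powersetCard_univ] at hp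
    have heven : Even p.2.card := by rw [hp.2]; exact ⟨i, by omega⟩
    have hchg : chg (gg p.1 p.2) = p.2 := by
      ext v
      simp only [chg, mem_filter, mem_univ, true_and]
      rw [← gg_change p.1 p.2 hk2 heven v]
    rw [mem_filter]
    refine ⟨mem_univ _, ?_⟩
    have h2 := chg_card (gg p.1 p.2)
    rw [hchg, hp.2] at h2
    omega
end

section
/- Every eigenvalue of B = (1/10)*[[−92,33,−33,−33,33],[33,−117,−8,−8,8],[−33,−8,−117,8,−8],[−33,−8,8,−117,−8],[33,8,−8,−8,−117]] is less than −2.6. -/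
theorem eigenvalues_lt :
    ∀ μ : ℝ, (∃ v : Fin 5 → ℝ, v ≠ 0 ∧
      ((1 / 10 : ℝ) • !![(-92 : ℝ), 33, -33, -33, 33;
        33, -117, -8, -8, 8;
        -33, -8, -117, 8, -8;
        -33, -8, 8, -117, -8;
        33, 8, -8, -8, -117]).mulVec v = μ • v) → μ < -2.6 := by
  rintro μ ⟨v, hv, hmul⟩
  have h0 := congrFun hmul 0
  have h1 := congrFun hmul 1
  have h2 := congrFun hmul 2
  have h3 := congrFun hmul 3
  have h4 := congrFun hmul 4
  simp [Matrix.mulVec, dotProduct, Fin.sum_univ_five] at h0 h1 h2 h3 h4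
  set a := v 0 with ha
  set b := v 1 with hb
  set c := v 2 with hc
  set d := v 3 with hd
  set e := v 4 with he
  have hN : 0 < a ^ 2 + b ^ 2 + c ^ 2 + d ^ 2 + e ^ 2 := by
    rcases Function.ne_iff.mp hv with ⟨i, hi⟩
    fin_cases i <;>
      [ (have : a ≠ 0 := hi); (have : b ≠ 0 := hi); (have : c ≠ 0 := hi);
        (have : d ≠ 0 := hi); (have : e ≠ 0 := hi) ] <;>
    linarith [sq_nonneg a, sq_nonneg b, sq_nonneg c, sq_nonneg d, sq_nonneg e,
      sq_pos_of_ne_zero this]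
  have hsum : μ * (a ^ 2 + b ^ 2 + c ^ 2 + d ^ 2 + e ^ 2) =
      (1/10) * (-92*a^2 - 117*b^2 - 117*c^2 - 117*d^2 - 117*e^2
        + 66*a*b - 66*a*c - 66*a*d + 66*a*e
        - 16*b*c - 16*b*d + 16*b*e + 16*c*d - 16*c*e - 16*d*e) := by
    linear_combination (-a) * h0 + (-b) * h1 + (-c) * h2 + (-d) * h3 + (-e) * h4
  by_contra hle
  push_neg at hle
  have hmuN : (-2.6 : ℝ) * (a ^ 2 + b ^ 2 + c ^ 2 + d ^ 2 + e ^ 2) ≤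
      μ * (a ^ 2 + b ^ 2 + c ^ 2 + d ^ 2 + e ^ 2) :=
    mul_le_mul_of_nonneg_right hle (le_of_lt hN)
  linarith [sq_nonneg (328*a - 165*b + 165*c + 165*d - 165*e),
    sq_nonneg (121359*b + 40345*c + 40345*d - 40345*e),
    sq_nonneg (81014*c - 40345*d + 40345*e),
    sq_nonneg (40669*d + 40345*e),
    sq_nonneg e, hN, hsum, hmuN]
end

section
/- For the function f̄(z₀₁, z₁₀) obtained from f by setting z = z₀₀ = z₁₁ = 0, the difference of the two polynomials arising from setting ∂f̄/∂z₀₁ = 0 and ∂f̄/∂z₁₀ = 0 factors as −2(6z₀₁ − 11 + 6z₁₀)(z₀₁ − z₁₀); consequently any interior stationary point of f̄ on [0,1/2]² with z₀₁+z₁₀ ≤ 1 has z₀₁ = z₁₀. -/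
set_option maxHeartbeats 1000000


/-- For `f̄` obtained from `f` by setting `z = z₀₀ = z₁₁ = 0`, the difference of the two
polynomials arising from the stationarity equations `∂f̄/∂z₀₁ = 0`, `∂f̄/∂z₁₀ = 0`
factors as a multiple of `(6z₀₁ + 6z₁₀ − 11)(z₀₁ − z₁₀)`; consequently any interior
stationary point of `f̄` on `[0,1/2]²` with `z₀₁ + z₁₀ ≤ 1` has `z₀₁ = z₁₀`. -/
theorem fbar_stationary_symmetric :
    let h : ℝ → ℝ := fun x => x * Real.log x
    let fbar : ℝ → ℝ → ℝ := fun u v =>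
      (9 / 4 - u - v) * Real.log 4 + Real.log 5 - h 5 + h (5 / 2)
        + h (1 - u - v) + h (5 / 2 - (1 - u - v))
        - h u - h v - h (1 / 2 - u) - h (1 / 2 - v)
    let P₁ : ℝ → ℝ → ℝ := fun u v => (3 / 2 + u + v) * (1 / 2 - u) - 4 * (1 - u - v) * u
    let P₂ : ℝ → ℝ → ℝ := fun u v => (3 / 2 + u + v) * (1 / 2 - v) - 4 * (1 - u - v) * v
    (∀ u v : ℝ, P₁ u v - P₂ u v = (1 / 2) * (6 * u + 6 * v - 11) * (u - v)) ∧
    (∀ u v : ℝ, u ∈ Set.Ioo (0 : ℝ) (1 / 2) → v ∈ Set.Ioo (0 : ℝ) (1 / 2) →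
      u + v ≤ 1 →
      deriv (fun t => fbar t v) u = 0 → deriv (fun t => fbar u t) v = 0 → u = v) := by
  intro h fbar P₁ P₂
  constructor
  · intro u v; simp only [P₁, P₂]; ring
  · intro u v hu hv huv hdu hdv
    obtain ⟨hu0, hu1⟩ := hu
    obtain ⟨hv0, hv1⟩ := hv
    have key : ∀ a b : ℝ, 0 < a → a < 1/2 → 0 < b → b < 1/2 →
        deriv (fun t => fbar t b) a = 0 →
        (3/2 + a + b) * (1/2 - a) = 4 * ((1 - a - b) * a) := by
      intro a b ha0 ha1 hb0 hb1 hd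
      have h1 : (0:ℝ) < 1 - a - b := by linarith
      have h2 : (0:ℝ) < 3/2 + a + b := by linarith
      have h3 : (0:ℝ) < 1/2 - a := by linarith
      have h2' : (0:ℝ) < 5/2 - (1 - a - b) := by linarith
      -- inner linear functions
      have i1 : HasDerivAt (fun t : ℝ => 1 - t - b) (-1) a := by
        simpa using ((hasDerivAt_id a).const_sub 1).sub_const b
      have i2 : HasDerivAt (fun t : ℝ => 5/2 - (1 - t - b)) 1 a := by
        simpa using i1.const_sub (5/2 : ℝ)
      have D1 : HasDerivAt (fun t : ℝ => h (1 - t - b))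
          ((Real.log (1 - a - b) + 1) * (-1)) a :=
        by have := (Real.hasDerivAt_mul_log h1.ne').comp a i1; exact this
      have D2 : HasDerivAt (fun t : ℝ => h (5/2 - (1 - t - b)))
          ((Real.log (5/2 - (1 - a - b)) + 1) * 1) a :=
        by have := (Real.hasDerivAt_mul_log h2'.ne').comp a i2; exact this
      have D3 : HasDerivAt (fun t : ℝ => h t) (Real.log a + 1) a :=
        Real.hasDerivAt_mul_log ha0.ne'
      have i4 : HasDerivAt (fun t : ℝ => 1/2 - t) (-1) a := by
        simpa using (hasDerivAt_id a).const_sub (1/2 : ℝ)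
      have D4 : HasDerivAt (fun t : ℝ => h (1/2 - t))
          ((Real.log (1/2 - a) + 1) * (-1)) a :=
        (Real.hasDerivAt_mul_log h3.ne').comp a i4
      have D0 : HasDerivAt (fun t : ℝ => (9/4 - t - b) * Real.log 4)
          ((-1) * Real.log 4) a := by
        have : HasDerivAt (fun t : ℝ => 9/4 - t - b) (-1) a := by
          simpa using ((hasDerivAt_id a).const_sub (9/4 : ℝ)).sub_const b
        simpa using this.mul_const (Real.log 4)
      have F : HasDerivAt (fun t => fbar t b)
          ((-1) * Real.log 4 + (Real.log (1 - a - b) + 1) * (-1)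
            + (Real.log (5/2 - (1 - a - b)) + 1) * 1 - (Real.log a + 1)
            - (Real.log (1/2 - a) + 1) * (-1)) a := by
        have S1 := D0.add_const (Real.log 5)
        have S2 := S1.sub_const (h 5)
        have S3 := S2.add_const (h (5/2))
        have S4 := S3.add D1
        have S5 := S4.add D2
        have S6 := S5.sub D3
        have S7 := S6.sub_const (h b)
        have S8 := S7.sub D4
        have S9 := S8.sub_const (h (1/2 - b))
        simp only [fbar]
        convert S9 using 1
        all_goals rfl
      have hD : (-1) * Real.log 4 + (Real.log (1 - a - b) + 1) * (-1)
            + (Real.log (5/2 - (1 - a - b)) + 1) * 1 - (Real.log a + 1)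
            - (Real.log (1/2 - a) + 1) * (-1) = 0 := by
        rw [← F.deriv]; exact hd
      have hlog : Real.log ((3/2 + a + b) * (1/2 - a)) = Real.log (4 * ((1 - a - b) * a)) := by
        rw [Real.log_mul h2.ne' h3.ne', Real.log_mul (by norm_num : (4:ℝ) ≠ 0)
          (by positivity : ((1 - a - b) * a) ≠ 0), Real.log_mul h1.ne' ha0.ne']
        have h42 : (5:ℝ)/2 - (1 - a - b) = 3/2 + a + b := by ring
        rw [h42] at hD
        linarith
      have := congrArg Real.exp hlog
      rwa [Real.exp_log (by positivity), Real.exp_log (by positivity)] at this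
    have e1 := key u v hu0 hu1 hv0 hv1 hdu
    have hswap : (fun t => fbar u t) = (fun t => fbar t u) := by
      funext t; simp only [fbar]; ring_nf
    rw [hswap] at hdv
    have e2 := key v u hv0 hv1 hu0 hu1 hdv
    have hfac : (6*u + 6*v - 11) * (u - v) = 0 := by linear_combination 2*e1 - 2*e2
    rcases mul_eq_zero.mp hfac with hc | hc
    · linarith
    · linarith
end
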